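/- Let M be a finitely generated B-module with compatible G-action such that M is generated as a B-module by its invariants M^G (equivalently, the counit map B ⊗_A M^G → M, b ⊗ m ↦ b • m, is surjective). Then M^G is a finitely generated A-module. -/

import Mathlib

/-- The subring of `G`-invariant elements of `B`. -/
def fixedSubring (G B : Type*) [Group G] [CommRing B] [MulSemiringAction G B] : Subring B where
  carrier := {b | ∀ g : G, g • b = b}
  mul_mem' := by intro a b ha hb g; rw [smul_mul', ha, hb]
  one_mem' := fun g => smul_one g
  add_mem' := by intro a b ha hb g; rw [smul_add, ha, hb]
  zero_mem' := fun g => smul_zero g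
  neg_mem' := by intro a ha g; rw [smul_neg, ha]

/-- A `B`-module `M` with a compatible `G`-action: `G` acts on `M` by additive
automorphisms and `g • (b • m) = (g • b) • (g • m)`. -/
class CompatibleAction (G B M : Type*) [Group G] [CommRing B] [MulSemiringAction G B]
    [AddCommGroup M] [Module B M] extends DistribMulAction G M where
  smul_smul_comm : ∀ (g : G) (b : B) (m : M), g • (b • m) = (g • b) • (g • m)

/-- The invariants `M^G`, as a module over the invariant subring `A = B^G`. -/
def invariantSubmodule (G B M : Type*) [Group G] [CommRing B] [MulSemiringAction G B]
    [AddCommGroup M] [Module B M] [CompatibleAction G B M] :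
    Submodule (fixedSubring G B) M where
  carrier := {m | ∀ g : G, g • m = m}
  add_mem' := by intro m m' hm hm' g; rw [smul_add, hm g, hm' g]
  zero_mem' := fun g => smul_zero g
  smul_mem' := by
    intro a m hm g
    rw [Subring.smul_def, CompatibleAction.smul_smul_comm g (a : B) m, hm g, a.2 g]

/-- If a finitely generated `B`-module `M` with compatible `G`-action is generated as a
`B`-module by its invariants `M^G`, then `M^G` is a finitely generated module over
`A = B^G`. -/
theorem invariants_fg_of_generated_by_invariants
    {G B M : Type*} [Group G] [Fintype G] [CommRing B] [MulSemiringAction G B]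
    [AddCommGroup M] [Module B M] [CompatibleAction G B M]
    (hcard : Invertible (Fintype.card G : B))
    (hfg : Module.Finite B M)
    (hgen : Submodule.span B {m : M | ∀ g : G, g • m = m} = ⊤) :
    (invariantSubmodule G B M).FG := by
  classical
  -- notation
  set A := fixedSubring G B with hA
  have hcardB : ∀ g : G, g • (Fintype.card G : B) = (Fintype.card G : B) := fun g =>
    map_natCast (MulSemiringAction.toRingHom G B g) _
  set c : B := ⅟(Fintype.card G : B) with hc
  -- the averaging factor is invariant
  have hc_fixed : ∀ g : G, g • c = c := by
    intro g
    have h1 : (Fintype.card G : B) * (g • c) = 1 := by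
      rw [← hcardB g, ← smul_mul', mul_invOf_self, smul_one]
    calc g • c = (c * (Fintype.card G : B)) * (g • c) := by rw [invOf_mul_self, one_mul]
      _ = c * ((Fintype.card G : B) * (g • c)) := by ring
      _ = c := by rw [h1, mul_one]
  -- the Reynolds average of any b : B is invariant
  have hfix : ∀ b : B, (c * ∑ g : G, g • b) ∈ A := by
    intro b h
    have h1 : h • (∑ g : G, g • b) = ∑ g : G, g • b := by
      rw [Finset.smul_sum]
      simp_rw [smul_smul]
      exact Equiv.sum_comp (Equiv.mulLeft h) (fun g => g • b)
    rw [smul_mul', hc_fixed h, h1]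
  -- choose a finite invariant generating set
  obtain ⟨S0, hS0⟩ := hfg.fg_top
  choose T hTsub hTmem using fun x : (S0 : Set M) =>
    Submodule.mem_span_finite_of_mem_span
      (show (x : M) ∈ Submodule.span B {m : M | ∀ g : G, g • m = m} from
        hgen ▸ Submodule.mem_top)
  set Tt : Finset M := S0.attach.biUnion (fun x => T ⟨x.1, x.2⟩) with hTt
  have hTt_sub : (Tt : Set M) ⊆ {m : M | ∀ g : G, g • m = m} := by
    intro m hm
    rcases Finset.mem_biUnion.mp hm with ⟨x, -, hx⟩
    exact hTsub _ hx
  have hTt_span : Submodule.span B (Tt : Set M) = ⊤ := by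
    rw [eq_top_iff, ← hS0, Submodule.span_le]
    intro x hx
    refine Submodule.span_mono ?_ (hTmem ⟨x, hx⟩)
    intro y hy
    exact Finset.mem_coe.mpr (Finset.mem_biUnion.mpr ⟨⟨x, hx⟩, Finset.mem_attach _ _, hy⟩)
  refine ⟨Tt, le_antisymm (Submodule.span_le.mpr ?_) ?_⟩
  · intro m hm g
    exact hTt_sub hm g
  · intro m hm
    have hminv : ∀ g : G, g • m = m := hm
    have hmem : m ∈ Submodule.span B (Tt : Set M) := hTt_span ▸ Submodule.mem_top
    obtain ⟨f, -, hf⟩ := Submodule.mem_span_finset.mp hmem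
    -- Reynolds operator applied to m
    have step1 : m = c • ∑ g : G, g • m := by
      simp_rw [hminv]
      rw [Finset.sum_const, Finset.card_univ, ← Nat.cast_smul_eq_nsmul B, smul_smul,
        invOf_mul_self, one_smul]
    have step2 : (∑ g : G, g • m) = ∑ i ∈ Tt, (∑ g : G, g • f i) • i := by
      have : ∀ g : G, g • m = ∑ i ∈ Tt, (g • f i) • (g • i) := by
        intro g
        rw [← hf, Finset.smul_sum]
        exact Finset.sum_congr rfl fun i _ => CompatibleAction.smul_smul_comm g (f i) i
      simp_rw [this]
      rw [Finset.sum_comm]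
      refine Finset.sum_congr rfl fun i hi => ?_
      rw [Finset.sum_smul]
      exact Finset.sum_congr rfl fun g _ => by rw [hTt_sub hi g]
    have step3 : m = ∑ i ∈ Tt, (c * ∑ g : G, g • f i) • i := by
      rw [step1, step2, Finset.smul_sum]
      refine Finset.sum_congr rfl fun i _ => ?_
      rw [smul_smul]
    rw [step3]
    refine Submodule.sum_mem _ fun i hi => ?_
    have : (c * ∑ g : G, g • f i) • i = (⟨c * ∑ g : G, g • f i, hfix (f i)⟩ : A) • i := rfl
    rw [this]
    exact Submodule.smul_mem _ _ (Submodule.subset_span hi)
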